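/- Let (y_i, u_i, f_i), i = 0, …, ℓ, be real triples satisfying the convex-through-origin interpolation inequalities: f_i ≥ f_j + u_j(y_i − y_j) for all i, j, u_i y_i ≥ f_i, and f_i ≥ 0. Let M be an (ℓ+1)×(ℓ+1) matrix and m ∈ ℝ^{ℓ+1} such that M_{ij} ≤ 0 for all i ≠ j, Mᵀ𝟙 ≥ 0 (componentwise), and M𝟙 + m ≥ 0 (componentwise). Then yᵀ M u + mᵀ f ≥ 0. -/
import Mathlib


/-- Multipliers in the dual cone `𝒦*` yield valid quadratic-plus-linear
inequalities for interpolable points. -/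
theorem stmt4 (ℓ : ℕ) (y u f_ : Fin (ℓ + 1) → ℝ)
    (h1 : ∀ i j, f_ i ≥ f_ j + u j * (y i - y j))
    (h2 : ∀ i, u i * y i ≥ f_ i)
    (h3 : ∀ i, f_ i ≥ 0)
    (M : Matrix (Fin (ℓ + 1)) (Fin (ℓ + 1)) ℝ) (m : Fin (ℓ + 1) → ℝ)
    (hoff : ∀ i j, i ≠ j → M i j ≤ 0)
    (hcol : ∀ j, 0 ≤ ∑ i, M i j)
    (hrowm : ∀ i, 0 ≤ (∑ j, M i j) + m i) :
    0 ≤ (∑ i, ∑ j, y i * M i j * u j) + ∑ i, m i * f_ i := by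
  have key : ∀ i j, M i j * (u j * y j + f_ i - f_ j) ≤ y i * M i j * u j := by
    intro i j
    rcases eq_or_ne i j with h | h
    · subst h; nlinarith []
    · have hM := hoff i j h
      have h1' := h1 i j
      nlinarith [mul_nonneg (by linarith : (0:ℝ) ≤ -M i j)
        (by linarith : (0:ℝ) ≤ u j * y j + f_ i - f_ j - u j * y i)]
  have hsum : ∑ i, ∑ j, M i j * (u j * y j + f_ i - f_ j)
      ≤ ∑ i, ∑ j, y i * M i j * u j :=
    Finset.sum_le_sum fun i _ => Finset.sum_le_sum fun j _ => key i j
  have expand : ∑ i, ∑ j, M i j * (u j * y j + f_ i - f_ j)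
      = (∑ j, (∑ i, M i j) * (u j * y j - f_ j)) + ∑ i, (∑ j, M i j) * f_ i := by
    have A : ∀ i j, M i j * (u j * y j + f_ i - f_ j)
        = M i j * (u j * y j - f_ j) + M i j * f_ i := fun i j => by ring
    simp_rw [A, Finset.sum_add_distrib]
    congr 1
    · rw [Finset.sum_comm]
      exact Finset.sum_congr rfl fun j _ => (Finset.sum_mul _ _ _).symm
    · exact Finset.sum_congr rfl fun i _ => (Finset.sum_mul _ _ _).symm
  have pos1 : 0 ≤ ∑ j, (∑ i, M i j) * (u j * y j - f_ j) :=
    Finset.sum_nonneg fun j _ => mul_nonneg (hcol j) (by linarith [h2 j])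
  have pos2 : 0 ≤ ∑ i, ((∑ j, M i j) + m i) * f_ i :=
    Finset.sum_nonneg fun i _ => mul_nonneg (hrowm i) (h3 i)
  have split : ∑ i, ((∑ j, M i j) + m i) * f_ i
      = (∑ i, (∑ j, M i j) * f_ i) + ∑ i, m i * f_ i := by
    rw [← Finset.sum_add_distrib]; congr 1; ext i; ring
  linarith [hsum, expand, pos1, pos2, split]
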